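/- Let Z : [0, μ̄] → ℝ be nonincreasing and λ-Lipschitz, let H(μ) = ρμ − ∫₀^μ Z(x)dx, and let μ* ∈ [0, μ̄] satisfy either Z(μ*) = ρ, or μ* = 0 and Z(0) ≤ ρ. Then for every μ ∈ [0, μ̄], |Z(μ) − Z(μ*)| ≤ √(2λ (H(μ) − H(μ*))). -/

import Mathlib

open MeasureTheory intervalIntegral

lemma lin_val (lam d c b : ℝ) (hpos : 0 < lam) (hc : c = b - d / lam) :
    ∫ x in c..b, (d - lam * (b - x)) = d ^ 2 / (2 * lam) := by
  have key : ∀ x : ℝ, d - lam * (b - x) = (d - lam * b) + lam * x := by intro x; ring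
  simp_rw [key]
  rw [intervalIntegral.integral_add (intervalIntegrable_const)
    ((Continuous.intervalIntegrable (by continuity) _ _ : IntervalIntegrable (fun x => lam * x) volume c b)),
    intervalIntegral.integral_const, intervalIntegral.integral_const_mul, integral_id]
  subst hc
  have hl : lam ≠ 0 := ne_of_gt hpos
  field_simp
  ring_nf
  field_simp
  ring

lemma aux_peak_right (lam a b : ℝ) (hlam : 0 ≤ lam) (hab : a ≤ b) (h : ℝ → ℝ)
    (hint : IntervalIntegrable h volume a b)
    (hnn : ∀ x ∈ Set.Icc a b, 0 ≤ h x)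
    (hlb : ∀ x ∈ Set.Icc a b, h b - lam * (b - x) ≤ h x)
    (hba : h b ≤ lam * (b - a)) :
    (h b) ^ 2 ≤ 2 * lam * ∫ x in a..b, h x := by
  rcases eq_or_lt_of_le hlam with h0 | hpos
  · have hb0 : h b = 0 := le_antisymm (by nlinarith) (hnn b ⟨hab, le_refl b⟩)
    rw [hb0, ← h0]; ring_nf; simp
  set d := h b with hd
  set c := b - d / lam with hc
  have hd0 : 0 ≤ d := hnn b ⟨hab, le_refl b⟩
  have hca : a ≤ c := by
    have : d / lam ≤ b - a := (div_le_iff₀ hpos).mpr (by linarith [hba])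
    simp only [hc]; linarith
  have hcb : c ≤ b := by
    have : 0 ≤ d / lam := div_nonneg hd0 hpos.le
    simp only [hc]; linarith
  have hint1 : IntervalIntegrable h volume a c :=
    hint.mono_set (Set.uIcc_subset_uIcc_iff_le.mpr ⟨by rw [min_eq_left hca, min_eq_left hab],
      by rw [max_eq_right hca, max_eq_right hab]; exact hcb⟩)
  have hint2 : IntervalIntegrable h volume c b :=
    hint.mono_set (Set.uIcc_subset_uIcc_iff_le.mpr ⟨by rw [min_eq_left hcb, min_eq_left hab]; exact hca,
      by rw [max_eq_right hcb, max_eq_right hab]⟩)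
  have hsplit : (∫ x in a..c, h x) + ∫ x in c..b, h x = ∫ x in a..b, h x :=
    intervalIntegral.integral_add_adjacent_intervals hint1 hint2
  have h1 : 0 ≤ ∫ x in a..c, h x :=
    intervalIntegral.integral_nonneg hca (fun x hx => hnn x ⟨hx.1, hx.2.trans hcb⟩)
  have h2 : (∫ x in c..b, (d - lam * (b - x))) ≤ ∫ x in c..b, h x := by
    apply intervalIntegral.integral_mono_on hcb
      ((continuous_const.sub (continuous_const.mul (continuous_const.sub continuous_id))).intervalIntegrable _ _)
      hint2
    exact fun x hx => hlb x ⟨hca.trans hx.1, hx.2⟩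
  have hval := lin_val lam d c b hpos hc
  rw [hval] at h2
  rw [← hsplit]
  have hsum : d ^ 2 / (2 * lam) ≤ (∫ x in a..c, h x) + ∫ x in c..b, h x := by linarith
  calc d ^ 2 = 2 * lam * (d ^ 2 / (2 * lam)) := by field_simp
    _ ≤ _ := mul_le_mul_of_nonneg_left hsum (by linarith)

lemma aux_peak_left (lam a b : ℝ) (hlam : 0 ≤ lam) (hab : a ≤ b) (h : ℝ → ℝ)
    (hint : IntervalIntegrable h volume a b)
    (hnn : ∀ x ∈ Set.Icc a b, 0 ≤ h x)
    (hlb : ∀ x ∈ Set.Icc a b, h a - lam * (x - a) ≤ h x)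
    (hba : h a ≤ lam * (b - a)) :
    (h a) ^ 2 ≤ 2 * lam * ∫ x in a..b, h x := by
  have hrefl : (∫ x in a..b, h (a + b - x)) = ∫ x in a..b, h x := by
    rw [intervalIntegral.integral_comp_sub_left h (a + b)]
    simp
  have hgint : IntervalIntegrable (fun x => h (a + b - x)) volume a b := by
    have := (hint.symm).comp_sub_left (a + b)
    simpa using this
  have key := aux_peak_right lam a b hlam hab (fun x => h (a + b - x)) hgint
    (fun x hx => hnn _ ⟨by simp only [Set.mem_Icc] at hx ⊢; linarith [hx.2], by linarith [hx.1]⟩)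
    (fun x hx => by
      simp only [Set.mem_Icc] at hx
      have hm : a + b - x ∈ Set.Icc a b := ⟨by linarith, by linarith⟩
      have h2 := hlb (a + b - x) hm
      have e2 : a + b - x - a = b - x := by ring
      rw [e2] at h2
      simp only [add_sub_cancel_right]
      exact h2)
    (by simpa using hba)
  simp only [add_sub_cancel_right] at key
  rwa [hrefl] at key



/-- Spend deviation is bounded by the square root of the artificial-objective regret. -/
theorem stmt_4 (μbar ρ lam : ℝ) (hμbar : 0 ≤ μbar) (hρ : 0 ≤ ρ) (hlam : 0 ≤ lam)
    (Z : ℝ → ℝ) (hZmono : AntitoneOn Z (Set.Icc 0 μbar))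
    (hZlip : ∀ a ∈ Set.Icc (0:ℝ) μbar, ∀ b ∈ Set.Icc (0:ℝ) μbar,
      |Z a - Z b| ≤ lam * |a - b|)
    (H : ℝ → ℝ) (hH : ∀ μ, H μ = ρ * μ - ∫ x in (0:ℝ)..μ, Z x)
    (μstar : ℝ) (hμstar : μstar ∈ Set.Icc (0:ℝ) μbar)
    (hopt : Z μstar = ρ ∨ (μstar = 0 ∧ Z 0 ≤ ρ)) :
    ∀ μ ∈ Set.Icc (0:ℝ) μbar,
      |Z μ - Z μstar| ≤ Real.sqrt (2 * lam * (H μ - H μstar)) := by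
  intro μ hμ
  have hZint : ∀ a ∈ Set.Icc (0:ℝ) μbar, ∀ b ∈ Set.Icc (0:ℝ) μbar,
      IntervalIntegrable Z MeasureTheory.volume a b := by
    intro a ha b hb
    apply AntitoneOn.intervalIntegrable
    apply hZmono.mono
    intro x hx
    rcases Set.mem_uIcc.mp hx with h | h
    · exact ⟨le_trans ha.1 h.1, h.2.trans hb.2⟩
    · exact ⟨le_trans hb.1 h.1, h.2.trans ha.2⟩
  have h0mem : (0:ℝ) ∈ Set.Icc (0:ℝ) μbar := ⟨le_refl _, hμbar⟩
  have hHdiff : ∀ p ∈ Set.Icc (0:ℝ) μbar, ∀ q ∈ Set.Icc (0:ℝ) μbar,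
      H q - H p = ρ * (q - p) - ∫ x in p..q, Z x := by
    intro p hp q hq
    rw [hH, hH]
    have hadd : (∫ x in (0:ℝ)..p, Z x) + ∫ x in p..q, Z x = ∫ x in (0:ℝ)..q, Z x :=
      intervalIntegral.integral_add_adjacent_intervals (hZint 0 h0mem p hp) (hZint p hp q hq)
    linarith [hadd]
  have habs_le : ∀ a ∈ Set.Icc (0:ℝ) μbar, ∀ b ∈ Set.Icc (0:ℝ) μbar, a ≤ b →
      Z a - Z b ≤ lam * (b - a) := by
    intro a ha b hb hab
    have h1 := hZlip a ha b hb
    have h2 : |a - b| = b - a := by rw [abs_of_nonpos (by linarith)]; ring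
    rw [h2] at h1
    linarith [le_abs_self (Z a - Z b)]
  rcases le_total μstar μ with hle | hle
  · -- μstar ≤ μ : peak at right endpoint
    have hmem : ∀ x ∈ Set.Icc μstar μ, x ∈ Set.Icc (0:ℝ) μbar :=
      fun x hx => ⟨hμstar.1.trans hx.1, hx.2.trans hμ.2⟩
    have key := aux_peak_right lam μstar μ hlam hle (fun x => Z μstar - Z x)
      (intervalIntegrable_const.sub (hZint μstar hμstar μ hμ))
      (fun x hx => sub_nonneg.mpr (hZmono hμstar (hmem x hx) hx.1))
      (fun x hx => by
        have := habs_le x (hmem x hx) μ hμ hx.2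
        linarith)
      (by
        have := habs_le μstar hμstar μ hμ hle
        linarith)
    -- integral identities
    have hZi : IntervalIntegrable Z MeasureTheory.volume μstar μ := hZint μstar hμstar μ hμ
    have hI1 : (∫ x in μstar..μ, (Z μstar - Z x)) =
        (μ - μstar) * Z μstar - ∫ x in μstar..μ, Z x := by
      rw [intervalIntegral.integral_sub intervalIntegrable_const hZi,
        intervalIntegral.integral_const, smul_eq_mul]
    have hI2 := hHdiff μstar hμstar μ hμ
    have hcross : 0 ≤ (ρ - Z μstar) * (μ - μstar) := by
      rcases hopt with h1 | ⟨h1, h2⟩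
      · rw [h1]; simp
      · subst h1; exact mul_nonneg (by linarith) (by linarith)
    have hd2 : (Z μstar - Z μ) ^ 2 ≤ 2 * lam * (H μ - H μstar) := by
      nlinarith [mul_nonneg hlam hcross]
    apply Real.le_sqrt_of_sq_le
    rw [sq_abs]
    nlinarith [hd2]
  · -- μ ≤ μstar
    rcases hopt with hZstar | ⟨h1, h2⟩
    · have hmem : ∀ x ∈ Set.Icc μ μstar, x ∈ Set.Icc (0:ℝ) μbar :=
        fun x hx => ⟨hμ.1.trans hx.1, hx.2.trans hμstar.2⟩
      have key := aux_peak_left lam μ μstar hlam hle (fun x => Z x - ρ)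
        ((hZint μ hμ μstar hμstar).sub intervalIntegrable_const)
        (fun x hx => by
          have : Z μstar ≤ Z x := hZmono (hmem x hx) hμstar hx.2
          linarith [hZstar ▸ this])
        (fun x hx => by
          have := habs_le μ hμ x (hmem x hx) hx.1
          linarith)
        (by
          have := habs_le μ hμ μstar hμstar hle
          linarith [hZstar ▸ this])
      have hZi : IntervalIntegrable Z MeasureTheory.volume μ μstar := hZint μ hμ μstar hμstar
      have hI1 : (∫ x in μ..μstar, (Z x - ρ)) =
          (∫ x in μ..μstar, Z x) - (μstar - μ) * ρ := by
        rw [intervalIntegral.integral_sub hZi intervalIntegrable_const,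
          intervalIntegral.integral_const, smul_eq_mul]
      have hI2 := hHdiff μ hμ μstar hμstar
      have hd2 : (Z μ - ρ) ^ 2 ≤ 2 * lam * (H μ - H μstar) := by nlinarith
      apply Real.le_sqrt_of_sq_le
      rw [sq_abs, hZstar]
      exact hd2
    · -- μstar = 0 and μ ≤ μstar, so μ = 0
      have hμ0 : μ = 0 := le_antisymm (h1 ▸ hle) hμ.1
      rw [hμ0, h1, sub_self, abs_zero]
      exact Real.sqrt_nonneg _
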